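/- Let X be a real Banach space whose norm is uniformly convex and uniformly smooth, let p > 1, and let f : X → ℝ be bounded below and uniformly continuous on every bounded subset of X. Then Δ_n^p f → f uniformly on every bounded subset of X as n → ∞. -/

import Mathlib

open scoped BigOperators

/-- The convex envelope of a function `h : X → ℝ`, given by the infimum over all
finite convex combinations. -/
noncomputable def convEnv {X : Type*} [NormedAddCommGroup X] [NormedSpace ℝ X]
    (h : X → ℝ) (x : X) : ℝ :=
  sInf { r : ℝ | ∃ (m : ℕ) (l : Fin m → ℝ) (z : Fin m → X),
    (∀ i, 0 < l i) ∧ ∑ i, l i = 1 ∧ ∑ i, l i • z i = x ∧ ∑ i, l i * h (z i) = r }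

/-- The kernel `K_p(x,y) = 2^(p-1)‖x‖^p + 2^(p-1)‖y‖^p - ‖x+y‖^p`. -/
noncomputable def Kp {X : Type*} [NormedAddCommGroup X] (p : ℝ) (x y : X) : ℝ :=
  2 ^ (p - 1) * ‖x‖ ^ p + 2 ^ (p - 1) * ‖y‖ ^ p - ‖x + y‖ ^ p

/-- `g_n^p(x) = inf_y (f(y) + n K_p(x,y)) + 2^(p-1) n ‖x‖^p` for real-valued `f`. -/
noncomputable def gnpR {X : Type*} [NormedAddCommGroup X] (p : ℝ) (f : X → ℝ)
    (n : ℕ) (x : X) : ℝ :=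
  (⨅ y, f y + (n : ℝ) * Kp p x y) + 2 ^ (p - 1) * (n : ℝ) * ‖x‖ ^ p

/-- `Δ_n^p f = co(g_n^p) - 2^(p-1) n ‖·‖^p` for real-valued `f`. -/
noncomputable def DeltaR {X : Type*} [NormedAddCommGroup X] [NormedSpace ℝ X]
    (p : ℝ) (f : X → ℝ) (n : ℕ) (x : X) : ℝ :=
  convEnv (gnpR p f n) x - 2 ^ (p - 1) * (n : ℝ) * ‖x‖ ^ p



open Real Set

/-- Tangent line inequality for `t ↦ t^p`, `p > 1`, on `[0, ∞)`. -/
lemma tangent_le_rpow {p : ℝ} (hp : 1 < p) {s t : ℝ} (hs : 0 ≤ s) (ht : 0 ≤ t) :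
    s ^ p + p * s ^ (p - 1) * (t - s) ≤ t ^ p := by
  rcases eq_or_lt_of_le hs with rfl | hs'
  · rw [Real.zero_rpow (by positivity : p ≠ 0),
      Real.zero_rpow (ne_of_gt (by linarith : (0:ℝ) < p - 1))]
    simpa using Real.rpow_nonneg ht p
  · have hx : (-1 : ℝ) ≤ t / s - 1 := by
      have : 0 ≤ t / s := div_nonneg ht hs'.le
      linarith
    have h := one_add_mul_self_le_rpow_one_add hx hp.le
    have h1 : (1 + (t / s - 1)) = t / s := by ring
    rw [h1] at h
    have h2 : (t / s) ^ p = t ^ p / s ^ p := Real.div_rpow ht hs'.le p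
    rw [h2] at h
    have hsp : (0:ℝ) < s ^ p := Real.rpow_pos_of_pos hs' p
    have h3 := mul_le_mul_of_nonneg_left h hsp.le
    have h4 : s ^ p * (t ^ p / s ^ p) = t ^ p := by field_simp
    rw [h4] at h3
    have h5 : s ^ (p - 1) = s ^ p / s := Real.rpow_sub_one hs'.ne' p
    have h6 : s ^ p * (1 + p * (t / s - 1)) = s ^ p + p * (s ^ p / s) * (t - s) := by
      field_simp
    rw [h6, ← h5] at h3
    exact h3

/-- Lower bound for increments of `s ↦ s^q` uniform over `s ∈ [0, R]`. -/
lemma incr_lower {q : ℝ} (hq : 0 < q) {a R s : ℝ} (ha : 0 < a) (hs : 0 ≤ s) (hsR : s ≤ R) :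
    min (a ^ q) ((R + a) ^ q - R ^ q) ≤ (s + a) ^ q - s ^ q := by
  have hR0 : 0 ≤ R := hs.trans hsR
  rcases le_or_gt 1 q with hq1 | hq1
  · refine (min_le_left _ _).trans ?_
    have hcx : ConvexOn ℝ (Set.Ici 0) fun x : ℝ => x ^ q := convexOn_rpow hq1
    have hT : (0:ℝ) < s + a := by linarith
    have hz2 : (0:ℝ) ^ q = 0 := Real.zero_rpow hq.ne'
    have c1 : s ^ q ≤ (s / (s + a)) * (s + a) ^ q := by
      have := hcx.2 (Set.mem_Ici.2 le_rfl : (0:ℝ) ∈ Set.Ici (0:ℝ))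
        (Set.mem_Ici.2 hT.le) (by positivity : (0:ℝ) ≤ a / (s + a))
        (by positivity : (0:ℝ) ≤ s / (s + a))
        (by field_simp; ring)
      simp only [smul_eq_mul, mul_zero, zero_add] at this
      have hz3 : s / (s + a) * (s + a) = s := by field_simp
      rw [hz3, hz2] at this
      simpa using this
    have c2 : a ^ q ≤ (a / (s + a)) * (s + a) ^ q := by
      have := hcx.2 (Set.mem_Ici.2 le_rfl : (0:ℝ) ∈ Set.Ici (0:ℝ))
        (Set.mem_Ici.2 hT.le) (by positivity : (0:ℝ) ≤ s / (s + a))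
        (by positivity : (0:ℝ) ≤ a / (s + a))
        (by field_simp)
      simp only [smul_eq_mul, mul_zero, zero_add] at this
      have hz3 : a / (s + a) * (s + a) = a := by field_simp
      rw [hz3, hz2] at this
      simpa using this
    have hsplit : s / (s + a) * (s + a) ^ q + a / (s + a) * (s + a) ^ q = (s + a) ^ q := by
      field_simp
    linarith
  · refine (min_le_right _ _).trans ?_
    rcases eq_or_lt_of_le hsR with rfl | hsR'
    · linarith
    · have hcc : ConcaveOn ℝ (Set.Ici 0) fun x : ℝ => x ^ q :=
        (Real.strictConcaveOn_rpow hq hq1).concaveOn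
      set d : ℝ := R + a - s with hd
      have hd0 : 0 < d := by simp only [hd]; linarith
      set μ : ℝ := (R - s) / d with hμ
      have hμ0 : 0 ≤ μ := div_nonneg (by linarith) hd0.le
      have hμ1 : 0 ≤ 1 - μ := by
        have : μ ≤ 1 := by rw [hμ, div_le_one hd0]; linarith
        linarith
      have hsum : μ + (1 - μ) = 1 := by ring
      have c1 := hcc.2 (Set.mem_Ici.2 hs) (Set.mem_Ici.2 (by linarith : (0:ℝ) ≤ R + a))
        hμ0 hμ1 hsum
      have c2 := hcc.2 (Set.mem_Ici.2 hs) (Set.mem_Ici.2 (by linarith : (0:ℝ) ≤ R + a))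
        hμ1 hμ0 (by ring)
      simp only [smul_eq_mul] at c1 c2
      have e1 : μ * s + (1 - μ) * (R + a) = s + a := by
        have hμd : μ * d = R - s := div_mul_cancel₀ (R - s) hd0.ne'
        rw [hd] at hμd; linear_combination (-1 : ℝ) * hμd
      have e2 : (1 - μ) * s + μ * (R + a) = R := by
        have hμd : μ * d = R - s := div_mul_cancel₀ (R - s) hd0.ne'
        rw [hd] at hμd; linear_combination hμd
      rw [e1] at c1
      rw [e2] at c2
      linarith

section LemT

open Real Set

variable {X : Type*} [NormedAddCommGroup X] [NormedSpace ℝ X]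

/-- Global subgradient of `‖·‖^p` at an arbitrary point. -/
lemma exists_norm_rpow_subgrad {p : ℝ} (hp : 1 < p) (w : X) :
    ∃ j : X →L[ℝ] ℝ, ∀ z : X, ‖w‖ ^ p + j (z - w) ≤ ‖z‖ ^ p := by
  rcases eq_or_ne w 0 with rfl | hw
  · refine ⟨0, fun z => ?_⟩
    simp only [ContinuousLinearMap.zero_apply, norm_zero]
    rw [Real.zero_rpow (by positivity : p ≠ 0)]
    simpa using Real.rpow_nonneg (norm_nonneg z) p
  · obtain ⟨j₀, hj₀norm, hj₀w⟩ := exists_dual_vector ℝ w (norm_ne_zero_iff.2 hw)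
    have hs0 : (0:ℝ) < ‖w‖ := norm_pos_iff.2 hw
    refine ⟨(p * ‖w‖ ^ (p - 1)) • j₀, fun z => ?_⟩
    have hj₀z : j₀ z ≤ ‖z‖ := by
      have h1 := j₀.le_opNorm z
      rw [hj₀norm, one_mul, Real.norm_eq_abs] at h1
      exact (le_abs_self _).trans h1
    have hcoef : (0:ℝ) ≤ p * ‖w‖ ^ (p - 1) :=
      mul_nonneg (by linarith) (Real.rpow_nonneg (norm_nonneg w) _)
    have happ : ((p * ‖w‖ ^ (p - 1)) • j₀) (z - w) = p * ‖w‖ ^ (p - 1) * (j₀ z - ‖w‖) := by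
      rw [ContinuousLinearMap.smul_apply, map_sub, hj₀w]
      simp [smul_eq_mul]
    rw [happ]
    have h1 : p * ‖w‖ ^ (p - 1) * (j₀ z - ‖w‖) ≤ p * ‖w‖ ^ (p - 1) * (‖z‖ - ‖w‖) :=
      mul_le_mul_of_nonneg_left (by linarith) hcoef
    have h2 := tangent_le_rpow hp (norm_nonneg w) (norm_nonneg z)
    linarith

set_option maxHeartbeats 2000000 in
/-- Uniform total convexity of `‖·‖^p` on bounded sets, in a uniformly convex space. -/
lemma exists_uniform_gap
    (hUC : ∀ ε : ℝ, 0 < ε → ∃ δ : ℝ, 0 < δ ∧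
      ∀ x y : X, ‖x‖ = 1 → ‖y‖ = 1 → ε ≤ ‖x - y‖ → ‖x + y‖ / 2 ≤ 1 - δ)
    {p : ℝ} (hp : 1 < p) {R r : ℝ} (hR : 1 ≤ R) (hr0 : 0 < r) (hr1 : r ≤ 1) :
    ∃ γ : ℝ, 0 < γ ∧ ∀ w : X, ‖w‖ ≤ R → ∃ j : X →L[ℝ] ℝ,
      (∀ z : X, ‖w‖ ^ p + j (z - w) ≤ ‖z‖ ^ p) ∧
      (∀ z : X, r ≤ ‖z - w‖ → ‖w‖ ^ p + j (z - w) + γ ≤ ‖z‖ ^ p) := by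
  obtain ⟨δ, hδ0, hδ⟩ := hUC (r / (2 * R)) (by positivity)
  have hp0 : (0:ℝ) < p := by linarith
  obtain ⟨q, hqdef⟩ : ∃ q : ℝ, q = p - 1 := ⟨_, rfl⟩
  have hq0 : (0:ℝ) < q := by rw [hqdef]; linarith
  have h8p : (0:ℝ) < (8 * p) ^ (1 / q) := Real.rpow_pos_of_pos (by linarith) _
  obtain ⟨ρ, hρdef⟩ : ∃ ρ : ℝ, ρ = min (r / 4) (r / 2 / (8 * p) ^ (1 / q)) := ⟨_, rfl⟩
  have hρ0 : (0:ℝ) < ρ := by rw [hρdef]; exact lt_min (by positivity) (by positivity)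
  have hρr4 : ρ ≤ r / 4 := hρdef.le.trans (min_le_left _ _)
  have hρpow : p * ρ ^ q ≤ (r / 2) ^ q / 8 := by
    have h1 : ρ ^ q ≤ (r / 2 / (8 * p) ^ (1 / q)) ^ q :=
      Real.rpow_le_rpow hρ0.le (hρdef.le.trans (min_le_right _ _)) hq0.le
    have h2 : (r / 2 / (8 * p) ^ (1 / q)) ^ q = (r / 2) ^ q / (8 * p) := by
      rw [Real.div_rpow (by positivity) h8p.le, ← Real.rpow_mul (by positivity : (0:ℝ) ≤ 8 * p),
        one_div_mul_cancel hq0.ne', Real.rpow_one]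
    rw [h2] at h1
    have h3 : p * ρ ^ q ≤ p * ((r / 2) ^ q / (8 * p)) :=
      mul_le_mul_of_nonneg_left h1 hp0.le
    have h4 : p * ((r / 2) ^ q / (8 * p)) = (r / 2) ^ q / 8 := by
      field_simp
    linarith
  obtain ⟨θ, hθdef⟩ : ∃ θ : ℝ, θ = ρ / 2 := ⟨_, rfl⟩
  have hθ0 : (0:ℝ) < θ := by rw [hθdef]; positivity
  have hθr8 : θ ≤ r / 8 := by rw [hθdef]; linarith
  obtain ⟨γa, hγa⟩ : ∃ x : ℝ, x = (3 * r / 4) ^ p / 4 := ⟨_, rfl⟩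
  obtain ⟨γb, hγb⟩ : ∃ x : ℝ, x = p * (θ / 2) * min ((θ / 2) ^ q) ((R + θ / 2) ^ q - R ^ q) :=
    ⟨_, rfl⟩
  obtain ⟨γd, hγd⟩ : ∃ x : ℝ, x = p * ρ ^ q * (ρ * δ) := ⟨_, rfl⟩
  have hγa0 : 0 < γa := by
    have := Real.rpow_pos_of_pos (by linarith : (0:ℝ) < 3 * r / 4) p
    rw [hγa]; linarith
  have hmin0 : 0 < min ((θ / 2) ^ q) ((R + θ / 2) ^ q - R ^ q) := by
    have h1 : (0:ℝ) < (θ / 2) ^ q := Real.rpow_pos_of_pos (by linarith) q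
    have h2 : R ^ q < (R + θ / 2) ^ q :=
      Real.rpow_lt_rpow (by linarith) (by linarith) hq0
    exact lt_min h1 (by linarith)
  have hγb0 : 0 < γb := by
    rw [hγb]
    exact mul_pos (mul_pos hp0 (by linarith)) hmin0
  have hγd0 : 0 < γd := by
    rw [hγd]
    exact mul_pos (mul_pos hp0 (Real.rpow_pos_of_pos hρ0 q)) (mul_pos hρ0 hδ0)
  have hrp0 : (0:ℝ) < r ^ p := Real.rpow_pos_of_pos hr0 p
  obtain ⟨γ, hγdef⟩ : ∃ x : ℝ, x = min γa (min γb (min γd (r ^ p))) := ⟨_, rfl⟩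
  have hγ0 : 0 < γ := by
    rw [hγdef]
    exact lt_min hγa0 (lt_min hγb0 (lt_min hγd0 hrp0))
  have hγlea : γ ≤ γa := hγdef.le.trans (min_le_left _ _)
  have hγleb : γ ≤ γb := hγdef.le.trans ((min_le_right _ _).trans (min_le_left _ _))
  have hγled : γ ≤ γd :=
    hγdef.le.trans ((min_le_right _ _).trans ((min_le_right _ _).trans (min_le_left _ _)))
  have hγler : γ ≤ r ^ p :=
    hγdef.le.trans ((min_le_right _ _).trans ((min_le_right _ _).trans (min_le_right _ _)))
  refine ⟨γ, hγ0, fun w hwR => ?_⟩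
  rcases eq_or_ne w 0 with rfl | hw
  · refine ⟨0, fun z => ?_, fun z hz => ?_⟩
    · simp only [ContinuousLinearMap.zero_apply, norm_zero]
      rw [Real.zero_rpow (by positivity : p ≠ 0)]
      simpa using Real.rpow_nonneg (norm_nonneg z) p
    · simp only [ContinuousLinearMap.zero_apply, norm_zero]
      rw [Real.zero_rpow (by positivity : p ≠ 0)]
      rw [sub_zero] at hz
      have : r ^ p ≤ ‖z‖ ^ p := Real.rpow_le_rpow hr0.le hz hp0.le
      linarith
  · obtain ⟨j₀, hj₀norm, hj₀w⟩ := exists_dual_vector ℝ w (norm_ne_zero_iff.2 hw)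
    obtain ⟨s, hsdef⟩ : ∃ x : ℝ, x = ‖w‖ := ⟨_, rfl⟩
    rw [← hsdef] at hwR hj₀w
    have hs0 : (0:ℝ) < s := by rw [hsdef]; exact norm_pos_iff.2 hw
    have hsq0 : (0:ℝ) ≤ s ^ q := Real.rpow_nonneg hs0.le q
    have hcoef : (0:ℝ) ≤ p * s ^ q := mul_nonneg hp0.le hsq0
    have hj₀z : ∀ z : X, j₀ z ≤ ‖z‖ := fun z => by
      have h1 := j₀.le_opNorm z
      rw [hj₀norm, one_mul, Real.norm_eq_abs] at h1
      exact (le_abs_self _).trans h1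
    have happ : ∀ z : X, ((p * s ^ q) • j₀) (z - w) = p * s ^ q * (j₀ z - s) := fun z => by
      rw [ContinuousLinearMap.smul_apply, map_sub, hj₀w]
      simp [smul_eq_mul]
    have hsub : ∀ z : X, ‖w‖ ^ p + ((p * s ^ q) • j₀) (z - w) ≤ ‖z‖ ^ p := fun z => by
      rw [happ z, ← hsdef]
      have h1 : p * s ^ q * (j₀ z - s) ≤ p * s ^ q * (‖z‖ - s) :=
        mul_le_mul_of_nonneg_left (by linarith [hj₀z z]) hcoef
      have h2 := tangent_le_rpow hp hs0.le (norm_nonneg z)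
      rw [← hqdef] at h2
      linarith
    refine ⟨(p * s ^ q) • j₀, hsub, fun z hzr => ?_⟩
    rw [happ z, ← hsdef]
    obtain ⟨t, htdef⟩ : ∃ x : ℝ, x = ‖z‖ := ⟨_, rfl⟩
    rw [← htdef]
    have ht0 : (0:ℝ) ≤ t := htdef ▸ norm_nonneg z
    have hj₀zt : j₀ z ≤ t := htdef ▸ hj₀z z
    rcases le_or_gt s ρ with hsρ | hsρ
    · -- small ‖w‖ case
      have htlb : 3 * r / 4 ≤ t := by
        have h1 : ‖z - w‖ ≤ ‖z‖ + ‖w‖ := norm_sub_le _ _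
        rw [← htdef, ← hsdef] at h1
        linarith
      have ht0' : (0:ℝ) < t := by linarith
      have hj : p * s ^ q * (j₀ z - s) ≤ t ^ p / 8 + (r / 2) ^ p / 8 := by
        have h1 : j₀ z - s ≤ t + ρ := by linarith
        have hsq : s ^ q ≤ ρ ^ q := Real.rpow_le_rpow hs0.le hsρ hq0.le
        have h2 : p * s ^ q * (j₀ z - s) ≤ p * ρ ^ q * (t + ρ) := by
          have hA : p * s ^ q ≤ p * ρ ^ q := mul_le_mul_of_nonneg_left hsq hp0.le
          have hB : (0:ℝ) ≤ t + ρ := by linarith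
          calc p * s ^ q * (j₀ z - s) ≤ p * s ^ q * (t + ρ) :=
                mul_le_mul_of_nonneg_left h1 hcoef
          _ ≤ p * ρ ^ q * (t + ρ) := mul_le_mul_of_nonneg_right hA hB
        have h3 : p * ρ ^ q * (t + ρ) ≤ ((r / 2) ^ q / 8) * (t + ρ) :=
          mul_le_mul_of_nonneg_right hρpow (by linarith)
        have h4 : (r / 2) ^ q * t ≤ t ^ p := by
          have ha : (r / 2) ^ q ≤ t ^ q :=
            Real.rpow_le_rpow (by linarith) (by linarith) hq0.le
          have hb : t ^ q * t = t ^ p := by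
            rw [← Real.rpow_add_one ht0'.ne' q, hqdef]
            norm_num
          calc (r / 2) ^ q * t ≤ t ^ q * t := mul_le_mul_of_nonneg_right ha ht0
          _ = t ^ p := hb
        have h5 : (r / 2) ^ q * ρ ≤ (r / 2) ^ p := by
          have hc : (r / 2) ^ q * (r / 2) = (r / 2) ^ p := by
            rw [← Real.rpow_add_one (by positivity : (r/2 : ℝ) ≠ 0) q, hqdef]
            norm_num
          have h₂ : (0:ℝ) ≤ (r / 2) ^ q := Real.rpow_nonneg (by linarith) q
          calc (r / 2) ^ q * ρ ≤ (r / 2) ^ q * (r / 2) :=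
                mul_le_mul_of_nonneg_left (by linarith) h₂
          _ = (r / 2) ^ p := hc
        have h6 : ((r / 2) ^ q / 8) * (t + ρ) = ((r / 2) ^ q * t) / 8 + ((r / 2) ^ q * ρ) / 8 := by
          ring
        linarith
      have hsp : s ^ p ≤ (r / 2) ^ p / 2 := by
        have h1 : s ^ p ≤ (r / 4) ^ p :=
          Real.rpow_le_rpow hs0.le (le_trans hsρ hρr4) hp0.le
        have h2 : (r / 4) ^ p = (r / 2) ^ p * (1 / 2 : ℝ) ^ p := by
          rw [← Real.mul_rpow (by linarith) (by norm_num)]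
          congr 1
          ring
        have h3 : ((1:ℝ) / 2) ^ p ≤ 1 / 2 := by
          have := Real.rpow_le_rpow_of_exponent_ge (by norm_num : (0:ℝ) < 1/2)
            (by norm_num : (1:ℝ)/2 ≤ 1) hp.le
          rwa [Real.rpow_one] at this
        have h4 : (0:ℝ) ≤ (r / 2) ^ p := Real.rpow_nonneg (by linarith) p
        have h5 : (r / 2) ^ p * (1 / 2 : ℝ) ^ p ≤ (r / 2) ^ p * (1 / 2) :=
          mul_le_mul_of_nonneg_left h3 h4
        linarith
      have hγa' : γ ≤ t ^ p / 4 := by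
        have h1 : (3 * r / 4) ^ p ≤ t ^ p :=
          Real.rpow_le_rpow (by linarith) htlb hp0.le
        rw [hγa] at hγlea
        linarith
      have hr2t : (r / 2) ^ p ≤ t ^ p :=
        Real.rpow_le_rpow (by linarith) (by linarith) hp0.le
      linarith
    · -- ‖w‖ > ρ
      have hsq : ρ ^ q ≤ s ^ q := Real.rpow_le_rpow hρ0.le hsρ.le hq0.le
      have hjt : p * s ^ q * (j₀ z - s) ≤ p * s ^ q * (t - s) :=
        mul_le_mul_of_nonneg_left (by linarith) hcoef
      rcases le_or_gt (s + θ) t with h2a | h2a'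
      · -- t well above s
        obtain ⟨u, hu⟩ : ∃ x : ℝ, x = s + θ / 2 := ⟨_, rfl⟩
        have hu0 : (0:ℝ) ≤ u := by rw [hu]; linarith
        have h1 := tangent_le_rpow hp hu0 ht0
        have h2 := tangent_le_rpow hp hs0.le hu0
        rw [← hqdef] at h1 h2
        have hincr : min ((θ / 2) ^ q) ((R + θ / 2) ^ q - R ^ q) ≤ u ^ q - s ^ q := by
          have h := incr_lower hq0 (by linarith : (0:ℝ) < θ / 2) hs0.le hwR
          rw [← hu] at h
          exact h
        have huq : s ^ q ≤ u ^ q :=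
          Real.rpow_le_rpow hs0.le (by rw [hu]; linarith) hq0.le
        have h3 : 0 ≤ p * ((u ^ q - s ^ q) * (t - u - θ / 2)) := by
          have ha : (0:ℝ) ≤ t - u - θ / 2 := by rw [hu]; linarith
          have hb : (0:ℝ) ≤ u ^ q - s ^ q := by linarith
          exact mul_nonneg hp0.le (mul_nonneg hb ha)
        have hiden : s ^ p + p * s ^ q * (t - s) + p * (θ / 2) * (u ^ q - s ^ q)
            = (s ^ p + p * s ^ q * (u - s)) + p * u ^ q * (t - u)
              - p * ((u ^ q - s ^ q) * (t - u - θ / 2)) := by rw [hu]; ring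
        have hD : s ^ p + p * s ^ q * (t - s) + p * (θ / 2) * (u ^ q - s ^ q) ≤ t ^ p := by
          rw [hiden]; linarith
        have hγb' : γ ≤ p * (θ / 2) * (u ^ q - s ^ q) := by
          have hm := mul_le_mul_of_nonneg_left hincr (mul_nonneg hp0.le (by linarith) : (0:ℝ) ≤ p * (θ / 2))
          rw [hγb] at hγleb
          linarith
        linarith
      · rcases le_or_gt t (s - θ) with h2b | h2b'
        · -- t well below s
          obtain ⟨u, hu⟩ : ∃ x : ℝ, x = s - θ / 2 := ⟨_, rfl⟩
          have hu0 : (0:ℝ) ≤ u := by rw [hu, hθdef]; linarith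
          have h1 := tangent_le_rpow hp hu0 ht0
          have h2 := tangent_le_rpow hp hs0.le hu0
          rw [← hqdef] at h1 h2
          have hincr : min ((θ / 2) ^ q) ((R + θ / 2) ^ q - R ^ q) ≤ s ^ q - u ^ q := by
            have hcap : u ≤ R := by rw [hu]; linarith
            have h := incr_lower hq0 (by linarith : (0:ℝ) < θ / 2) hu0 hcap
            have he : u + θ / 2 = s := by rw [hu]; ring
            rw [he] at h
            exact h
          have huq : u ^ q ≤ s ^ q :=
            Real.rpow_le_rpow hu0 (by rw [hu]; linarith) hq0.le
          have h3 : 0 ≤ p * ((s ^ q - u ^ q) * (u - t - θ / 2)) := by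
            have ha : (0:ℝ) ≤ u - t - θ / 2 := by rw [hu]; linarith
            have hb : (0:ℝ) ≤ s ^ q - u ^ q := by linarith
            exact mul_nonneg hp0.le (mul_nonneg hb ha)
          have hiden : s ^ p + p * s ^ q * (t - s) + p * (θ / 2) * (s ^ q - u ^ q)
              = (s ^ p + p * s ^ q * (u - s)) + p * u ^ q * (t - u)
                - p * ((s ^ q - u ^ q) * (u - t - θ / 2)) := by rw [hu]; ring
          have hD : s ^ p + p * s ^ q * (t - s) + p * (θ / 2) * (s ^ q - u ^ q) ≤ t ^ p := by
            rw [hiden]; linarith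
          have hγb' : γ ≤ p * (θ / 2) * (s ^ q - u ^ q) := by
            have hm := mul_le_mul_of_nonneg_left hincr (mul_nonneg hp0.le (by linarith) : (0:ℝ) ≤ p * (θ / 2))
            rw [hγb] at hγleb
            linarith
          linarith
        · -- |t - s| < θ : use uniform convexity
          have ht0' : (0:ℝ) < t := by linarith
          have hz0 : z ≠ 0 := by
            intro h
            rw [h] at htdef
            simp at htdef
            linarith
          have hkey : r - θ ≤ s * ‖s⁻¹ • w - t⁻¹ • z‖ := by
            have e1 : s • (s⁻¹ • w - t⁻¹ • z) = (w - z) + (z - (s / t) • z) := by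
              rw [smul_sub, smul_smul, smul_smul, mul_inv_cancel₀ hs0.ne', one_smul,
                div_eq_mul_inv, mul_comm s t⁻¹]
              abel
            have e2 : ‖z - (s / t) • z‖ = |t - s| := by
              have ha : z - (s / t) • z = (1 - s / t) • z := by
                rw [sub_smul, one_smul]
              rw [ha, norm_smul, Real.norm_eq_abs, ← htdef]
              have hb : |1 - s / t| = |t - s| / t := by
                rw [show (1 : ℝ) - s / t = (t - s) / t by field_simp, abs_div,
                  abs_of_pos ht0']
              rw [hb]
              field_simp
            have e3 : ‖w - z‖ - ‖z - (s / t) • z‖ ≤ ‖(w - z) + (z - (s / t) • z)‖ := by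
              have h := norm_sub_le ((w - z) + (z - (s / t) • z)) (z - (s / t) • z)
              simp only [add_sub_cancel_right] at h
              linarith
            have e4 : ‖s • (s⁻¹ • w - t⁻¹ • z)‖ = s * ‖s⁻¹ • w - t⁻¹ • z‖ := by
              rw [norm_smul, Real.norm_eq_abs, abs_of_pos hs0]
            have e5 : |t - s| ≤ θ := by
              rw [abs_le]; constructor <;> linarith
            have e6 : r ≤ ‖w - z‖ := by
              rw [norm_sub_rev w z]; exact hzr
            calc r - θ ≤ ‖w - z‖ - ‖z - (s / t) • z‖ := by rw [e2]; linarith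
            _ ≤ ‖(w - z) + (z - (s / t) • z)‖ := e3
            _ = s * ‖s⁻¹ • w - t⁻¹ • z‖ := by rw [← e1, e4]
          have hun : ‖s⁻¹ • w‖ = 1 := by
            rw [norm_smul, Real.norm_eq_abs, abs_inv, abs_of_pos hs0, ← hsdef,
              inv_mul_cancel₀ hs0.ne']
          have hvn : ‖t⁻¹ • z‖ = 1 := by
            rw [norm_smul, Real.norm_eq_abs, abs_inv, abs_of_pos ht0', ← htdef,
              inv_mul_cancel₀ ht0'.ne']
          have hεuv : r / (2 * R) ≤ ‖s⁻¹ • w - t⁻¹ • z‖ := by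
            have h2 : r / 2 ≤ s * ‖s⁻¹ • w - t⁻¹ • z‖ := by linarith
            have h3 : s * ‖s⁻¹ • w - t⁻¹ • z‖ ≤ R * ‖s⁻¹ • w - t⁻¹ • z‖ :=
              mul_le_mul_of_nonneg_right hwR (norm_nonneg _)
            rw [div_le_iff₀ (by linarith : (0:ℝ) < 2 * R)]
            have h4 : (0:ℝ) ≤ R * ‖s⁻¹ • w - t⁻¹ • z‖ :=
              mul_nonneg (by linarith) (norm_nonneg _)
            have h5 : ‖s⁻¹ • w - t⁻¹ • z‖ * (2 * R) = 2 * (R * ‖s⁻¹ • w - t⁻¹ • z‖) := by ring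
            linarith
          have huc := hδ _ _ hun hvn hεuv
          have hj₀w'' : j₀ w = s := hj₀w
          have hj₀u : j₀ (s⁻¹ • w) = 1 := by
            rw [map_smul, smul_eq_mul, hj₀w'', inv_mul_cancel₀ hs0.ne']
          have hj₀v : j₀ (t⁻¹ • z) ≤ 1 - 2 * δ := by
            have h1 : j₀ (s⁻¹ • w + t⁻¹ • z) ≤ ‖s⁻¹ • w + t⁻¹ • z‖ := hj₀z _
            have h2 : j₀ (s⁻¹ • w + t⁻¹ • z) = j₀ (s⁻¹ • w) + j₀ (t⁻¹ • z) := map_add _ _ _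
            rw [h2, hj₀u] at h1
            linarith
          have hj₀zz : j₀ z ≤ t * (1 - 2 * δ) := by
            have hzv : z = t • t⁻¹ • z := by
              rw [smul_smul, mul_inv_cancel₀ ht0'.ne', one_smul]
            calc j₀ z = t * j₀ (t⁻¹ • z) := by
                  conv_lhs => rw [hzv]
                  rw [map_smul, smul_eq_mul]
            _ ≤ t * (1 - 2 * δ) := mul_le_mul_of_nonneg_left hj₀v ht0'.le
          have hgap : ρ * δ ≤ t - j₀ z := by
            have hρ2t : ρ ≤ 2 * t := by linarith
            have h2t : ρ * δ ≤ 2 * t * δ := mul_le_mul_of_nonneg_right hρ2t hδ0.le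
            have hexp : t * (1 - 2 * δ) = t - 2 * t * δ := by ring
            rw [hexp] at hj₀zz
            linarith
          have h1 := tangent_le_rpow hp hs0.le ht0
          rw [← hqdef] at h1
          have hγd' : γ ≤ p * s ^ q * (ρ * δ) := by
            have hmono : p * ρ ^ q * (ρ * δ) ≤ p * s ^ q * (ρ * δ) :=
              mul_le_mul_of_nonneg_right (mul_le_mul_of_nonneg_left hsq hp0.le)
                (mul_nonneg hρ0.le hδ0.le)
            rw [hγd] at hγled
            linarith
          have hjj : p * s ^ q * (j₀ z - s) ≤ p * s ^ q * (t - s) - p * s ^ q * (ρ * δ) := by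
            have hm := mul_le_mul_of_nonneg_left
              (by linarith : j₀ z - s ≤ (t - s) - ρ * δ) hcoef
            have he : p * s ^ q * ((t - s) - ρ * δ)
                = p * s ^ q * (t - s) - p * s ^ q * (ρ * δ) := by ring
            linarith
          linarith

end LemT

section KpFacts

open Real Set

variable {X : Type*} [NormedAddCommGroup X] [NormedSpace ℝ X]

lemma two_rpow_succ {p : ℝ} : (2:ℝ) ^ (p - 1) * 2 = 2 ^ p := by
  rw [← Real.rpow_add_one (by norm_num : (2:ℝ) ≠ 0) (p - 1)]
  norm_num

lemma norm_add_self_rpow {p : ℝ} (x : X) : ‖x + x‖ ^ p = 2 ^ p * ‖x‖ ^ p := by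
  have h1 : ‖x + x‖ = 2 * ‖x‖ := by
    rw [← two_smul ℝ x, norm_smul, Real.norm_eq_abs]
    norm_num
  rw [h1, Real.mul_rpow (by norm_num) (norm_nonneg x)]

lemma Kp_self {p : ℝ} (x : X) : Kp p x x = 0 := by
  unfold Kp
  rw [norm_add_self_rpow, ← two_rpow_succ (p := p)]
  generalize (2:ℝ) ^ (p - 1) = c
  ring

lemma half_smul_add_norm_rpow {p : ℝ} (x y : X) :
    ‖x + y‖ ^ p = 2 ^ p * ‖(2⁻¹ : ℝ) • (x + y)‖ ^ p := by
  have h1 : (2:ℝ) • ((2⁻¹ : ℝ) • (x + y)) = x + y := by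
    rw [smul_smul]; norm_num
  have h2 : ‖x + y‖ = 2 * ‖(2⁻¹ : ℝ) • (x + y)‖ := by
    conv_lhs => rw [← h1]
    rw [norm_smul, Real.norm_eq_abs]
    norm_num
  rw [h2, Real.mul_rpow (by norm_num) (norm_nonneg _)]

lemma sub_half_smul_add (x y : X) :
    (x - (2⁻¹ : ℝ) • (x + y)) + (y - (2⁻¹ : ℝ) • (x + y)) = 0 := by
  module

lemma Kp_nonneg {p : ℝ} (hp : 1 < p) (x y : X) : 0 ≤ Kp p x y := by
  obtain ⟨j, hj⟩ := exists_norm_rpow_subgrad hp ((2⁻¹ : ℝ) • (x + y))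
  have h1 := hj x
  have h2 := hj y
  have hsum : j (x - (2⁻¹ : ℝ) • (x + y)) + j (y - (2⁻¹ : ℝ) • (x + y)) = 0 := by
    rw [← map_add, sub_half_smul_add, map_zero]
  unfold Kp
  rw [half_smul_add_norm_rpow, ← two_rpow_succ (p := p)]
  have hc : (0:ℝ) ≤ 2 ^ (p - 1) := Real.rpow_nonneg (by norm_num) _
  have h3 : 2 * ‖(2⁻¹ : ℝ) • (x + y)‖ ^ p ≤ ‖x‖ ^ p + ‖y‖ ^ p := by linarith
  nlinarith [mul_le_mul_of_nonneg_left h3 hc]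

/-- Quantitative positivity of the kernel on bounded sets, away from the diagonal. -/
lemma Kp_uniform_pos
    (hUC : ∀ ε : ℝ, 0 < ε → ∃ δ : ℝ, 0 < δ ∧
      ∀ x y : X, ‖x‖ = 1 → ‖y‖ = 1 → ε ≤ ‖x - y‖ → ‖x + y‖ / 2 ≤ 1 - δ)
    {p : ℝ} (hp : 1 < p) {R r : ℝ} (hR : 1 ≤ R) (hr0 : 0 < r) (hr1 : r ≤ 1) :
    ∃ η : ℝ, 0 < η ∧ ∀ z y : X, ‖z‖ ≤ R → ‖y‖ ≤ R → r ≤ ‖z - y‖ → η ≤ Kp p z y := by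
  obtain ⟨γ, hγ0, hT⟩ := exists_uniform_gap hUC hp hR (by linarith : (0:ℝ) < r / 2)
    (by linarith : r / 2 ≤ 1)
  have hc : (0:ℝ) ≤ 2 ^ (p - 1) := Real.rpow_nonneg (by norm_num) _
  have hc1 : (0:ℝ) < 2 ^ (p - 1) := Real.rpow_pos_of_pos (by norm_num) _
  refine ⟨2 ^ (p - 1) * γ, mul_pos hc1 hγ0, fun z y hz hy hzy => ?_⟩
  have hwR : ‖(2⁻¹ : ℝ) • (z + y)‖ ≤ R := by
    rw [norm_smul, Real.norm_eq_abs]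
    have h1 : ‖z + y‖ ≤ ‖z‖ + ‖y‖ := norm_add_le _ _
    have h2 : |(2⁻¹ : ℝ)| = 2⁻¹ := by norm_num
    rw [h2]
    nlinarith [norm_nonneg (z + y)]
  obtain ⟨j, hjsub, hjgap⟩ := hT _ hwR
  have hzw : z - (2⁻¹ : ℝ) • (z + y) = (2⁻¹ : ℝ) • (z - y) := by module
  have hzwn : r / 2 ≤ ‖z - (2⁻¹ : ℝ) • (z + y)‖ := by
    rw [hzw, norm_smul, Real.norm_eq_abs]
    have h2 : |(2⁻¹ : ℝ)| = 2⁻¹ := by norm_num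
    rw [h2]
    linarith
  have h1 := hjgap z hzwn
  have h2 := hjsub y
  have hsum : j (z - (2⁻¹ : ℝ) • (z + y)) + j (y - (2⁻¹ : ℝ) • (z + y)) = 0 := by
    rw [← map_add, sub_half_smul_add, map_zero]
  unfold Kp
  rw [half_smul_add_norm_rpow, ← two_rpow_succ (p := p)]
  have h3 : 2 * ‖(2⁻¹ : ℝ) • (z + y)‖ ^ p + γ ≤ ‖z‖ ^ p + ‖y‖ ^ p := by linarith
  nlinarith [mul_le_mul_of_nonneg_left h3 hc]

/-- The kernel is large when the second argument is large. -/
lemma Kp_growth {p : ℝ} (hp : 1 < p) {A : ℝ} (hA : 1 ≤ A) :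
    ∃ R₁ : ℝ, ∀ z y : X, ‖z‖ ≤ A → R₁ ≤ ‖y‖ → 1 ≤ Kp p z y := by
  have hp0 : (0:ℝ) < p := by linarith
  obtain ⟨c, hcdef⟩ : ∃ c : ℝ, c = (2:ℝ) ^ (p - 1) := ⟨_, rfl⟩
  have hc1 : (1:ℝ) < c := by
    rw [hcdef, Real.one_lt_rpow_iff_of_pos (by norm_num : (0:ℝ) < 2)]
    exact Or.inl ⟨by norm_num, by linarith⟩
  have hcpos : (0:ℝ) < (c + 1) / 2 := by linarith
  have hc1' : (1:ℝ) < (c + 1) / 2 := by linarith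
  obtain ⟨σ, hσdef⟩ : ∃ σ : ℝ, σ = ((c + 1) / 2) ^ (1 / p) - 1 := ⟨_, rfl⟩
  have hσ0 : 0 < σ := by
    rw [hσdef, sub_pos, Real.one_lt_rpow_iff_of_pos hcpos]
    exact Or.inl ⟨hc1', by positivity⟩
  have hσp : (1 + σ) ^ p = (c + 1) / 2 := by
    rw [hσdef, show (1:ℝ) + (((c + 1) / 2) ^ (1 / p) - 1) = ((c + 1) / 2) ^ (1 / p) by ring,
      ← Real.rpow_mul hcpos.le, one_div_mul_cancel hp0.ne', Real.rpow_one]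
  obtain ⟨B, hBdef⟩ : ∃ B : ℝ, B = (2 / (c - 1)) ^ (1 / p) := ⟨_, rfl⟩
  have hq0 : (0:ℝ) ≤ 2 / (c - 1) := div_nonneg (by norm_num) (by linarith)
  have hB0 : 0 ≤ B := by
    rw [hBdef]; exact Real.rpow_nonneg hq0 _
  have hBp : B ^ p = 2 / (c - 1) := by
    rw [hBdef, ← Real.rpow_mul hq0, one_div_mul_cancel hp0.ne', Real.rpow_one]
  refine ⟨max (A / σ) B, fun z y hz hy => ?_⟩
  have hb0 : 0 ≤ ‖y‖ := norm_nonneg y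
  have hbB : B ≤ ‖y‖ := le_trans (le_max_right _ _) hy
  have hbA : A / σ ≤ ‖y‖ := le_trans (le_max_left _ _) hy
  have hAb : A + ‖y‖ ≤ (1 + σ) * ‖y‖ := by
    have h := (div_le_iff₀ hσ0).1 hbA
    nlinarith
  have h2 : ‖z + y‖ ^ p ≤ ((c + 1) / 2) * ‖y‖ ^ p := by
    have ha : ‖z + y‖ ≤ (1 + σ) * ‖y‖ := by
      have := norm_add_le z y
      linarith
    calc ‖z + y‖ ^ p ≤ ((1 + σ) * ‖y‖) ^ p :=
          Real.rpow_le_rpow (norm_nonneg _) ha hp0.le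
    _ = (1 + σ) ^ p * ‖y‖ ^ p := Real.mul_rpow (by linarith) hb0
    _ = ((c + 1) / 2) * ‖y‖ ^ p := by rw [hσp]
  have h3 : 2 / (c - 1) ≤ ‖y‖ ^ p := by
    rw [← hBp]
    exact Real.rpow_le_rpow hB0 hbB hp0.le
  have h4 : (0:ℝ) ≤ c * ‖z‖ ^ p := by
    have := Real.rpow_nonneg (norm_nonneg z) p
    nlinarith
  have h5 : ((c - 1) / 2) * (2 / (c - 1)) ≤ ((c - 1) / 2) * ‖y‖ ^ p :=
    mul_le_mul_of_nonneg_left h3 (by linarith)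
  have h6 : ((c - 1) / 2) * (2 / (c - 1)) = 1 := by
    field_simp
    exact div_self (by linarith : c - 1 ≠ 0)
  unfold Kp
  rw [← hcdef]
  nlinarith [h2, h5, h6, h4]

end KpFacts

section Envelope

open Real Set

variable {X : Type*} [NormedAddCommGroup X] [NormedSpace ℝ X]

/-- A function uniformly continuous on a closed ball is bounded above there. -/
lemma exists_bound_of_uc {f : X → ℝ} {R₂ : ℝ} (hR₂ : 0 < R₂)
    (huc : UniformContinuousOn f (Metric.closedBall 0 R₂)) :
    ∃ M : ℝ, ∀ x : X, ‖x‖ ≤ R₂ → f x ≤ M := by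
  obtain ⟨δ, hδ0, hδ⟩ := Metric.uniformContinuousOn_iff.1 huc 1 one_pos
  obtain ⟨N, hNdef⟩ : ∃ N : ℕ, N = ⌈R₂ / δ⌉₊ + 1 := ⟨_, rfl⟩
  have hN0 : 0 < N := by rw [hNdef]; omega
  have hN0' : (0:ℝ) < N := by exact_mod_cast hN0
  have hstep : R₂ / N < δ := by
    have h1 : R₂ / δ ≤ (⌈R₂ / δ⌉₊ : ℝ) := Nat.le_ceil _
    have h2 : ((⌈R₂ / δ⌉₊ : ℕ) : ℝ) < (N : ℝ) := by
      rw [hNdef]; push_cast; linarith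
    have h3 : R₂ ≤ (⌈R₂ / δ⌉₊ : ℝ) * δ := by
      rw [div_le_iff₀ hδ0] at h1; linarith
    have h4 : (⌈R₂ / δ⌉₊ : ℝ) * δ < (N : ℝ) * δ := mul_lt_mul_of_pos_right h2 hδ0
    rw [div_lt_iff₀ hN0']
    calc R₂ ≤ (⌈R₂ / δ⌉₊ : ℝ) * δ := h3
    _ < (N:ℝ) * δ := h4
    _ = δ * N := by ring
  refine ⟨f 0 + N, fun x hx => ?_⟩
  have hmem : ∀ k : ℕ, k ≤ N → ((k:ℝ) / (N:ℝ)) • x ∈ Metric.closedBall (0:X) R₂ := by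
    intro k hk
    rw [Metric.mem_closedBall, dist_zero_right, norm_smul, Real.norm_eq_abs,
      abs_of_nonneg (by positivity : (0:ℝ) ≤ (k:ℝ) / (N:ℝ))]
    have hk1 : (k:ℝ) / (N:ℝ) ≤ 1 := by
      rw [div_le_one hN0']; exact_mod_cast hk
    calc (k:ℝ) / N * ‖x‖ ≤ 1 * ‖x‖ :=
          mul_le_mul_of_nonneg_right hk1 (norm_nonneg x)
    _ = ‖x‖ := one_mul _
    _ ≤ R₂ := hx
  have key : ∀ k : ℕ, k ≤ N → f (((k:ℝ) / (N:ℝ)) • x) ≤ f 0 + k := by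
    intro k
    induction k with
    | zero => intro _; norm_num
    | succ k ih =>
      intro hk
      have hk' : k ≤ N := by omega
      have h1 := ih hk'
      have hdist : dist ((((k+1:ℕ):ℝ) / (N:ℝ)) • x) (((k:ℝ) / (N:ℝ)) • x) < δ := by
        rw [dist_eq_norm, ← sub_smul]
        have he : (((k+1:ℕ):ℝ) / (N:ℝ)) - ((k:ℝ) / (N:ℝ)) = 1 / N := by
          push_cast; ring
        rw [he, norm_smul, Real.norm_eq_abs,
          abs_of_nonneg (by positivity : (0:ℝ) ≤ 1 / (N:ℝ))]
        calc 1 / (N:ℝ) * ‖x‖ ≤ 1 / (N:ℝ) * R₂ :=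
              mul_le_mul_of_nonneg_left hx (by positivity)
        _ = R₂ / N := by ring
        _ < δ := hstep
      have h2 := hδ _ (hmem (k+1) hk) _ (hmem k hk') hdist
      rw [Real.dist_eq] at h2
      have h3 := (abs_lt.1 h2).2
      push_cast at h1 h3 ⊢
      linarith
  have hfin := key N le_rfl
  rw [div_self hN0'.ne', one_smul] at hfin
  exact hfin

/-- The convex envelope is below the function (given a lower bound). -/
lemma convEnv_le_self {h : X → ℝ} {m' : ℝ} (hb : ∀ z, m' ≤ h z) (x : X) :
    convEnv h x ≤ h x := by
  have hbdd : BddBelow { r : ℝ | ∃ (m : ℕ) (l : Fin m → ℝ) (z : Fin m → X),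
      (∀ i, 0 < l i) ∧ ∑ i, l i = 1 ∧ ∑ i, l i • z i = x ∧ ∑ i, l i * h (z i) = r } := by
    refine ⟨m', ?_⟩
    rintro r ⟨mm, l, zf, hl, hs1, hsx, rfl⟩
    have h1 : ∀ i ∈ Finset.univ, l i * m' ≤ l i * h (zf i) := fun i _ =>
      mul_le_mul_of_nonneg_left (hb _) (hl i).le
    have h2 := Finset.sum_le_sum h1
    rwa [← Finset.sum_mul, hs1, one_mul] at h2
  have hmem : h x ∈ { r : ℝ | ∃ (m : ℕ) (l : Fin m → ℝ) (z : Fin m → X),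
      (∀ i, 0 < l i) ∧ ∑ i, l i = 1 ∧ ∑ i, l i • z i = x ∧ ∑ i, l i * h (z i) = r } := by
    exact ⟨1, fun _ => 1, fun _ => x, fun i => one_pos, by simp, by simp, by simp⟩
  exact csInf_le hbdd hmem

/-- Affine minorants pass to the convex envelope. -/
lemma affine_le_convEnv {h : X → ℝ} (a : ℝ) (j : X →L[ℝ] ℝ)
    (hmin : ∀ z : X, a + j z ≤ h z) (x : X) : a + j x ≤ convEnv h x := by
  apply le_csInf
  · exact ⟨h x, 1, fun _ => 1, fun _ => x, fun i => one_pos, by simp, by simp, by simp⟩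
  · rintro r ⟨mm, l, zf, hl, hs1, hsx, rfl⟩
    have h1 : ∀ i ∈ Finset.univ, l i * (a + j (zf i)) ≤ l i * h (zf i) := fun i _ =>
      mul_le_mul_of_nonneg_left (hmin _) (hl i).le
    have h2 := Finset.sum_le_sum h1
    have e1 : ∑ i, l i * (a + j (zf i)) = a + j x := by
      have e2 : ∀ i ∈ Finset.univ, l i * (a + j (zf i)) = l i * a + j (l i • zf i) :=
        fun i _ => by rw [map_smul, smul_eq_mul]; ring
      rw [Finset.sum_congr rfl e2, Finset.sum_add_distrib, ← Finset.sum_mul, hs1, one_mul,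
        ← map_sum, hsx]
    rw [e1] at h2
    exact h2

/-- Upper bound for `gnpR`. -/
lemma gnpR_le {p : ℝ} (hp : 1 < p) {f : X → ℝ} {m' : ℝ} (hm : ∀ y, m' ≤ f y)
    (n : ℕ) (x : X) : gnpR p f n x ≤ f x + 2 ^ (p - 1) * (n : ℝ) * ‖x‖ ^ p := by
  unfold gnpR
  have hbdd : BddBelow (Set.range fun y => f y + (n:ℝ) * Kp p x y) := by
    refine ⟨m', ?_⟩
    rintro _ ⟨y, rfl⟩
    have h1 := Kp_nonneg hp x y
    have h2 : (0:ℝ) ≤ (n:ℝ) * Kp p x y := mul_nonneg (Nat.cast_nonneg n) h1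
    have := hm y
    simp only []
    linarith
  have h1 : (⨅ y, f y + (n:ℝ) * Kp p x y) ≤ f x + (n:ℝ) * Kp p x x := ciInf_le hbdd x
  rw [Kp_self] at h1
  simp only [mul_zero, add_zero] at h1
  linarith

/-- Lower bound for `gnpR`. -/
lemma gnpR_ge {p : ℝ} (hp : 1 < p) {f : X → ℝ} {m' : ℝ} (hm : ∀ y, m' ≤ f y)
    (n : ℕ) (x : X) : m' + 2 ^ (p - 1) * (n : ℝ) * ‖x‖ ^ p ≤ gnpR p f n x := by
  unfold gnpR
  have h1 : m' ≤ ⨅ y, f y + (n:ℝ) * Kp p x y := by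
    apply le_ciInf
    intro y
    have h2 : (0:ℝ) ≤ (n:ℝ) * Kp p x y := mul_nonneg (Nat.cast_nonneg n) (Kp_nonneg hp x y)
    linarith [hm y]
  linarith

lemma gnpR_ge' {p : ℝ} (hp : 1 < p) {f : X → ℝ} {m' : ℝ} (hm : ∀ y, m' ≤ f y)
    (n : ℕ) (x : X) : m' ≤ gnpR p f n x := by
  have h1 := gnpR_ge hp hm n x
  have h2 : (0:ℝ) ≤ 2 ^ (p - 1) * (n:ℝ) * ‖x‖ ^ p :=
    mul_nonneg (mul_nonneg (Real.rpow_nonneg (by norm_num) _) (Nat.cast_nonneg n))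
      (Real.rpow_nonneg (norm_nonneg x) _)
  linarith

end Envelope


set_option maxHeartbeats 2000000 in
/-- For a Banach space whose norm is uniformly convex and uniformly smooth, `p > 1`
and `f : X → ℝ` bounded below and uniformly continuous on bounded sets, `Δ_n^p f → f`
uniformly on every bounded subset of `X`. -/
theorem stmt_3 {X : Type*} [NormedAddCommGroup X] [NormedSpace ℝ X] [CompleteSpace X]
    (hUC : ∀ ε : ℝ, 0 < ε → ∃ δ : ℝ, 0 < δ ∧
      ∀ x y : X, ‖x‖ = 1 → ‖y‖ = 1 → ε ≤ ‖x - y‖ → ‖x + y‖ / 2 ≤ 1 - δ)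
    (hUS : Filter.Tendsto
      (fun τ : ℝ => (sSup {r : ℝ | ∃ x y : X, ‖x‖ = 1 ∧ ‖y‖ = 1 ∧
        r = (‖x + τ • y‖ + ‖x - τ • y‖) / 2 - 1}) / τ)
      (nhdsWithin 0 (Set.Ioi (0 : ℝ))) (nhds 0))
    (p : ℝ) (hp : 1 < p)
    (f : X → ℝ)
    (hbdd : ∃ m : ℝ, ∀ x, m ≤ f x)
    (hucb : ∀ s : Set X, Bornology.IsBounded s → UniformContinuousOn f s) :
    ∀ s : Set X, Bornology.IsBounded s →
      TendstoUniformlyOn (fun (n : ℕ) (x : X) => DeltaR p f n x) f Filter.atTop s := by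
  classical
  obtain ⟨m₀, hm₀⟩ := hbdd
  intro s hs
  rw [Metric.tendstoUniformlyOn_iff]
  intro ε hε
  have hp0 : (0:ℝ) < p := by linarith
  -- radius
  obtain ⟨R₀, hsR₀⟩ := hs.subset_closedBall 0
  obtain ⟨R, hRdef⟩ : ∃ R : ℝ, R = max R₀ 1 := ⟨_, rfl⟩
  have hR1 : 1 ≤ R := hRdef.ge.trans' (le_max_right _ _)
  have hsR : ∀ x ∈ s, ‖x‖ ≤ R := by
    intro x hx
    have := hsR₀ hx
    rw [Metric.mem_closedBall, dist_zero_right] at this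
    exact this.trans (hRdef.ge.trans' (le_max_left _ _))
  -- modulus of continuity of f on the ball of radius R + 2
  have hballbdd : Bornology.IsBounded (Metric.closedBall (0:X) (R + 2)) :=
    Metric.isBounded_closedBall
  obtain ⟨δ₁', hδ₁'0, hδ₁'⟩ :=
    Metric.uniformContinuousOn_iff.1 (hucb _ hballbdd) (ε / 8) (by linarith)
  obtain ⟨δ₁, hδ₁def⟩ : ∃ d : ℝ, d = min (δ₁' / 2) 1 := ⟨_, rfl⟩
  have hδ₁0 : 0 < δ₁ := by rw [hδ₁def]; exact lt_min (by linarith) one_pos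
  have hδ₁1 : δ₁ ≤ 1 := hδ₁def.le.trans (min_le_right _ _)
  have hδ₁lt : δ₁ < δ₁' := by
    have := hδ₁def.le.trans (min_le_left _ _)
    linarith
  have hmod : ∀ a b : X, ‖a‖ ≤ R + 2 → ‖b‖ ≤ R + 2 → dist a b ≤ δ₁ →
      |f a - f b| < ε / 8 := by
    intro a b ha hb hab
    have h1 := hδ₁' a (by rwa [Metric.mem_closedBall, dist_zero_right])
      b (by rwa [Metric.mem_closedBall, dist_zero_right]) (lt_of_le_of_lt hab hδ₁lt)
    rwa [Real.dist_eq] at h1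
  -- upper bound for f on the ball of radius R + 2
  obtain ⟨M, hM⟩ := exists_bound_of_uc (show (0:ℝ) < R + 2 by linarith) (hucb _ hballbdd)
  have hMm : m₀ ≤ M := (hm₀ 0).trans (hM 0 (by simp; linarith))
  -- growth radius
  obtain ⟨R₁, hR₁⟩ := Kp_growth (X := X) hp (show (1:ℝ) ≤ R + 1 by linarith)
  -- quantitative kernel positivity with separation δ₁ on the ball of radius Rbig
  obtain ⟨Rbig, hRbigdef⟩ : ∃ x : ℝ, x = max (R + 2) (max R₁ 1) := ⟨_, rfl⟩
  have hRbig1 : 1 ≤ Rbig := hRbigdef.ge.trans' ((le_max_right _ _).trans' (le_max_right _ _))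
  have hRbigR2 : R + 2 ≤ Rbig := hRbigdef.ge.trans' (le_max_left _ _)
  have hRbigR₁ : R₁ ≤ Rbig :=
    hRbigdef.ge.trans' ((le_max_left R₁ 1).trans (le_max_right (R + 2) (max R₁ 1)))
  obtain ⟨η, hη0, hηK⟩ := Kp_uniform_pos hUC hp hRbig1 hδ₁0 hδ₁1
  -- uniform gap for the norm power on the ball of radius R
  obtain ⟨γ, hγ0, hγT⟩ := exists_uniform_gap hUC hp hR1 hδ₁0 hδ₁1
  -- choice of N
  obtain ⟨N, hNdef⟩ : ∃ N : ℕ,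
      N = ⌈(M - m₀) / η⌉₊ + ⌈(M - m₀) / γ⌉₊ + ⌈(M - m₀)⌉₊ + 1 := ⟨_, rfl⟩
  filter_upwards [Filter.eventually_ge_atTop N] with n hn
  intro x hx
  have hxR : ‖x‖ ≤ R := hsR x hx
  have hnN : (N : ℝ) ≤ (n : ℝ) := Nat.cast_le.2 hn
  have hnη : M - m₀ ≤ (n : ℝ) * η := by
    have h1 : (M - m₀) / η ≤ (⌈(M - m₀) / η⌉₊ : ℝ) := Nat.le_ceil _
    have h2 : ((⌈(M - m₀) / η⌉₊ : ℕ) : ℝ) ≤ (N : ℝ) := by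
      rw [hNdef]; push_cast
      linarith [(Nat.cast_nonneg ⌈(M - m₀) / γ⌉₊ : (0:ℝ) ≤ (⌈(M - m₀) / γ⌉₊ : ℝ)),
        (Nat.cast_nonneg ⌈(M - m₀)⌉₊ : (0:ℝ) ≤ (⌈(M - m₀)⌉₊ : ℝ))]
    have h3 : (M - m₀) / η ≤ (n : ℝ) := by linarith
    rw [div_le_iff₀ hη0] at h3
    linarith [h3]
  have hnγ : M - m₀ ≤ (n : ℝ) * γ := by
    have h1 : (M - m₀) / γ ≤ (⌈(M - m₀) / γ⌉₊ : ℝ) := Nat.le_ceil _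
    have h2 : ((⌈(M - m₀) / γ⌉₊ : ℕ) : ℝ) ≤ (N : ℝ) := by
      rw [hNdef]; push_cast
      linarith [(Nat.cast_nonneg ⌈(M - m₀) / η⌉₊ : (0:ℝ) ≤ (⌈(M - m₀) / η⌉₊ : ℝ)),
        (Nat.cast_nonneg ⌈(M - m₀)⌉₊ : (0:ℝ) ≤ (⌈(M - m₀)⌉₊ : ℝ))]
    have h3 : (M - m₀) / γ ≤ (n : ℝ) := by linarith
    rw [div_le_iff₀ hγ0] at h3
    linarith [h3]
  have hn1 : M - m₀ ≤ (n : ℝ) := by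
    have h1 : (M - m₀) ≤ (⌈(M - m₀)⌉₊ : ℝ) := Nat.le_ceil _
    have h2 : ((⌈(M - m₀)⌉₊ : ℕ) : ℝ) ≤ (N : ℝ) := by
      rw [hNdef]; push_cast
      linarith [(Nat.cast_nonneg ⌈(M - m₀) / η⌉₊ : (0:ℝ) ≤ (⌈(M - m₀) / η⌉₊ : ℝ)),
        (Nat.cast_nonneg ⌈(M - m₀) / γ⌉₊ : (0:ℝ) ≤ (⌈(M - m₀) / γ⌉₊ : ℝ))]
    linarith
  have hc0 : (0:ℝ) < 2 ^ (p - 1) := Real.rpow_pos_of_pos (by norm_num) _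
  have hc1 : (1:ℝ) < 2 ^ (p - 1) := by
    rw [Real.one_lt_rpow_iff_of_pos (by norm_num : (0:ℝ) < 2)]
    exact Or.inl ⟨by norm_num, by linarith⟩
  have hcn0 : (0:ℝ) ≤ 2 ^ (p - 1) * (n : ℝ) := mul_nonneg hc0.le (Nat.cast_nonneg n)
  -- upper bound
  have hub : DeltaR p f n x ≤ f x := by
    unfold DeltaR
    have h1 : convEnv (gnpR p f n) x ≤ gnpR p f n x :=
      convEnv_le_self (fun z => gnpR_ge' hp hm₀ n z) x
    have h2 := gnpR_le hp hm₀ n x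
    linarith
  -- lower bound
  have hlb : f x - ε / 2 ≤ DeltaR p f n x := by
    obtain ⟨j, hjsub, hjgap⟩ := hγT x hxR
    have hφ : ∀ z : X,
        (f x - ε / 2 + 2 ^ (p - 1) * (n : ℝ) * ‖x‖ ^ p
          - 2 ^ (p - 1) * (n : ℝ) * j x) + ((2 ^ (p - 1) * (n : ℝ)) • j) z
        ≤ gnpR p f n z := by
      intro z
      have happz : ((2 ^ (p - 1) * (n : ℝ)) • j) z = 2 ^ (p - 1) * (n : ℝ) * j z := by
        rw [ContinuousLinearMap.smul_apply, smul_eq_mul]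
      rw [happz]
      have hjz : j (z - x) = j z - j x := by rw [map_sub]
      rcases le_or_gt ‖z - x‖ δ₁ with hnear | hfar
      · -- `z` is near `x`
        have hzR1 : ‖z‖ ≤ R + 1 := by
          have h1 : ‖z‖ ≤ ‖x‖ + ‖z - x‖ := by
            have := norm_add_le (z - x) x
            simp only [sub_add_cancel] at this
            linarith
          linarith
        have hFn : f x - ε / 4 ≤ ⨅ y, f y + (n:ℝ) * Kp p z y := by
          apply le_ciInf
          intro y
          rcases le_or_gt (dist y z) δ₁ with hynear | hyfar
          · -- y near z : use uniform continuity
            have hyR2 : ‖y‖ ≤ R + 2 := by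
              have h1 : ‖y‖ ≤ ‖z‖ + ‖y - z‖ := by
                have := norm_add_le (y - z) z
                simp only [sub_add_cancel] at this
                linarith
              rw [dist_eq_norm] at hynear
              linarith
            have h1 := hmod y z hyR2 (by linarith) hynear
            have h2 := hmod z x (by linarith) (by linarith)
              (by rw [dist_eq_norm]; exact hnear)
            have h3 : (0:ℝ) ≤ (n:ℝ) * Kp p z y :=
              mul_nonneg (Nat.cast_nonneg n) (Kp_nonneg hp z y)
            have h4 := (abs_lt.1 h1).1
            have h5 := (abs_lt.1 h2).1
            linarith
          · rcases le_or_gt ‖y‖ Rbig with hyRb | hyRb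
            · -- y in the big ball but far from z : kernel at least η
              have hK := hηK z y (by linarith) hyRb
                (by rw [← dist_eq_norm, dist_comm]; exact hyfar.le)
              have h1 : (n:ℝ) * η ≤ (n:ℝ) * Kp p z y :=
                mul_le_mul_of_nonneg_left hK (Nat.cast_nonneg n)
              have h2 : f x ≤ M := hM x (by linarith)
              have h3 := hm₀ y
              linarith
            · -- y outside the big ball : kernel at least 1
              have hK := hR₁ z y (by linarith) (by linarith)
              have h1 : (n:ℝ) * 1 ≤ (n:ℝ) * Kp p z y :=
                mul_le_mul_of_nonneg_left hK (Nat.cast_nonneg n)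
              have h2 : f x ≤ M := hM x (by linarith)
              have h3 := hm₀ y
              linarith
        have hzp := hjsub z
        have hmul : 2 ^ (p - 1) * (n:ℝ) * (‖x‖ ^ p + j (z - x))
            ≤ 2 ^ (p - 1) * (n:ℝ) * ‖z‖ ^ p :=
          mul_le_mul_of_nonneg_left hzp hcn0
        unfold gnpR
        rw [hjz] at hmul
        have hexp : 2 ^ (p - 1) * (n:ℝ) * (‖x‖ ^ p + (j z - j x))
            = 2 ^ (p - 1) * (n:ℝ) * ‖x‖ ^ p + 2 ^ (p - 1) * (n:ℝ) * j z
              - 2 ^ (p - 1) * (n:ℝ) * j x := by ring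
        rw [hexp] at hmul
        linarith
      · -- `z` is far from `x` : use the uniform gap
        have hzgap := hjgap z hfar.le
        have hFn0 : m₀ ≤ ⨅ y, f y + (n:ℝ) * Kp p z y := by
          apply le_ciInf
          intro y
          have h1 : (0:ℝ) ≤ (n:ℝ) * Kp p z y :=
            mul_nonneg (Nat.cast_nonneg n) (Kp_nonneg hp z y)
          linarith [hm₀ y]
        have hmul : 2 ^ (p - 1) * (n:ℝ) * (‖x‖ ^ p + j (z - x) + γ)
            ≤ 2 ^ (p - 1) * (n:ℝ) * ‖z‖ ^ p :=
          mul_le_mul_of_nonneg_left hzgap hcn0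
        rw [hjz] at hmul
        have hexp : 2 ^ (p - 1) * (n:ℝ) * (‖x‖ ^ p + (j z - j x) + γ)
            = 2 ^ (p - 1) * (n:ℝ) * ‖x‖ ^ p + 2 ^ (p - 1) * (n:ℝ) * j z
              - 2 ^ (p - 1) * (n:ℝ) * j x + 2 ^ (p - 1) * ((n:ℝ) * γ) := by ring
        rw [hexp] at hmul
        have hγn : (n:ℝ) * γ ≤ 2 ^ (p - 1) * ((n:ℝ) * γ) :=
          le_mul_of_one_le_left (mul_nonneg (Nat.cast_nonneg n) hγ0.le) hc1.le
        have hfxM : f x ≤ M := hM x (by linarith)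
        unfold gnpR
        linarith
    have hco := affine_le_convEnv _ ((2 ^ (p - 1) * (n : ℝ)) • j) hφ x
    have happx : ((2 ^ (p - 1) * (n : ℝ)) • j) x = 2 ^ (p - 1) * (n : ℝ) * j x := by
      rw [ContinuousLinearMap.smul_apply, smul_eq_mul]
    rw [happx] at hco
    unfold DeltaR
    linarith
  rw [Real.dist_eq, abs_lt]
  constructor <;> linarith
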